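/- Let n = 2k+3 for k ≥ 0. The chain S_1 ⊂ ⋯ ⊂ S_{k+1} where S_i = {1, 2, …, i} ∪ {n−i+1, …, n} is a maximal face of the h-complex Δ_n of dimension k (corresponding to the block decomposition 1,n | 2,n−1 | ⋯ | (n−1)/2, (n+3)/2 | (n+1)/2). -/

import Mathlib

/-- The chain `L` of subsets of `{1,…,n}` (encoded as `Finset (Fin n)`) with the
sentinels `S₀ = ∅` and `S_{j+1} = univ` adjoined. -/
def withSent (n : ℕ) (L : List (Finset (Fin n))) : List (Finset (Fin n)) :=
  (∅ :: L) ++ [Finset.univ]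

/-- `L` is a face of the h-complex `Δₙ` of the truncated Boolean algebra: a strictly
increasing chain of proper nonempty subsets such that, with sentinels adjoined,
every consecutive pair of blocks has `max (S_i \ S_{i-1}) > min (S_{i+1} \ S_i)`
(expressed as: some element of the lower difference exceeds some element of the
upper difference, which is equivalent since max ≥ a and min ≤ c). -/
def IsFace (n : ℕ) (L : List (Finset (Fin n))) : Prop :=
  (withSent n L).Chain' (· ⊂ ·) ∧
  ∀ i, ∀ h : i + 2 < (withSent n L).length,
    ∃ a ∈ (withSent n L).get ⟨i + 1, by omega⟩ \ (withSent n L).get ⟨i, by omega⟩,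
      ∃ c ∈ (withSent n L).get ⟨i + 2, h⟩ \ (withSent n L).get ⟨i + 1, by omega⟩, c < a

namespace MaxFaceAux

/-- The full sentinel chain `U k j` for `j = 0, …, k+2`. -/
def U (k j : ℕ) : Finset (Fin (2 * k + 3)) :=
  Finset.univ.filter fun x => (x : ℕ) < j ∨ 2 * k + 3 - j ≤ (x : ℕ)

lemma mem_U {k j : ℕ} {x : Fin (2 * k + 3)} :
    x ∈ U k j ↔ ((x : ℕ) < j ∨ 2 * k + 3 - j ≤ (x : ℕ)) := by
  simp [U]

lemma U_zero (k : ℕ) : U k 0 = ∅ := by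
  ext x
  have := x.isLt
  simp only [mem_U, Finset.notMem_empty, iff_false]
  omega

lemma U_top (k : ℕ) : U k (k + 2) = Finset.univ := by
  ext x
  have := x.isLt
  simp only [mem_U, Finset.mem_univ, iff_true]
  omega

lemma U_subset {k j j' : ℕ} (h : j ≤ j') : U k j ⊆ U k j' := by
  intro x hx
  rw [mem_U] at hx ⊢
  omega

lemma U_ssubset {k j : ℕ} (hj : j ≤ k + 1) : U k j ⊂ U k (j + 1) := by
  refine ⟨U_subset (Nat.le_succ j), fun hsub => ?_⟩
  have hx : (⟨j, by omega⟩ : Fin (2 * k + 3)) ∈ U k (j + 1) := by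
    rw [mem_U]; left; exact Nat.lt_succ_self j
  have h2 := hsub hx
  rw [mem_U] at h2
  simp only at h2
  omega

lemma U_ssubset' {k j j' : ℕ} (h : j < j') (h' : j' ≤ k + 2) : U k j ⊂ U k j' :=
  (U_ssubset (by omega)).trans_subset (U_subset (by omega))

lemma mem_diff_U {k j : ℕ} (hj : j ≤ k + 1) {x : Fin (2 * k + 3)} :
    x ∈ U k (j + 1) \ U k j ↔ ((x : ℕ) = j ∨ (x : ℕ) = 2 * k + 2 - j) := by
  have := x.isLt
  simp only [Finset.mem_sdiff, mem_U]
  omega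

lemma withSent_eq (k : ℕ) :
    withSent (2 * k + 3) (List.ofFn fun i : Fin (k + 1) =>
        Finset.univ.filter fun x : Fin (2 * k + 3) =>
          (x : ℕ) < (i : ℕ) + 1 ∨ 2 * k + 3 - ((i : ℕ) + 1) ≤ (x : ℕ)) =
      List.ofFn fun j : Fin (k + 3) => U k (j : ℕ) := by
  have h1 : (List.ofFn fun j : Fin (k + 3) => U k (j : ℕ)) =
      U k 0 :: List.ofFn fun j : Fin (k + 2) => U k ((j : ℕ) + 1) := by
    rw [List.ofFn_succ]
    simp [Fin.val_succ]
  have h2 : (List.ofFn fun j : Fin (k + 2) => U k ((j : ℕ) + 1)) =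
      (List.ofFn fun j : Fin (k + 1) => U k ((j : ℕ) + 1)) ++ [U k (k + 2)] := by
    rw [List.ofFn_succ']
    simp [List.concat_eq_append, Fin.coe_castSucc, Fin.val_last]
  rw [h1, h2, U_zero, U_top]
  rfl

end MaxFaceAux

open MaxFaceAux in
theorem maximal_face_n_eq_2k3 (k : ℕ) (L : List (Finset (Fin (2 * k + 3))))
    (hL : L = List.ofFn fun i : Fin (k + 1) =>
      Finset.univ.filter fun x : Fin (2 * k + 3) =>
        (x : ℕ) < (i : ℕ) + 1 ∨ 2 * k + 3 - ((i : ℕ) + 1) ≤ (x : ℕ)) :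
    IsFace (2 * k + 3) L ∧ L.length = k + 1 ∧
      ∀ L', IsFace (2 * k + 3) L' → L.Sublist L' → L' = L := by
  have hWS : withSent (2 * k + 3) L = List.ofFn fun j : Fin (k + 3) => U k (j : ℕ) := by
    rw [hL]; exact withSent_eq k
  have hgetW : ∀ (m : ℕ) (hm : m < (withSent (2 * k + 3) L).length),
      (withSent (2 * k + 3) L).get ⟨m, hm⟩ = U k m := by
    intro m hm
    rw [List.get_of_eq hWS, List.get_ofFn]
    rfl
  have hlenW : (withSent (2 * k + 3) L).length = k + 3 := by
    rw [hWS]; simp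
  refine ⟨⟨?_, ?_⟩, by simp [hL], ?_⟩
  · -- chain'
    rw [hWS]; refine List.isChain_iff_getElem.mpr ?_
    intro i h
    simp only [List.length_ofFn] at h
    simp only [List.get_ofFn, Fin.coe_cast, List.getElem_ofFn]
    exact U_ssubset' (Nat.lt_succ_self i) (by omega)
  · -- triple condition for L itself
    intro i h
    rw [hlenW] at h
    simp only [hgetW]
    refine ⟨⟨2 * k + 2 - i, by omega⟩, ?_, ⟨i + 1, by omega⟩, ?_, ?_⟩
    · simp only [Finset.mem_sdiff, mem_U]
      omega
    · simp only [Finset.mem_sdiff, mem_U]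
      omega
    · rw [Fin.lt_def]
      simp only
      omega
  · -- maximality
    intro L' hF hsub
    by_contra hne
    obtain ⟨hch, hcond⟩ := hF
    set W := withSent (2 * k + 3) L' with hWdef
    have hlen' : k + 2 ≤ L'.length := by
      have hle : L.length ≤ L'.length := hsub.length_le
      simp only [hL, List.length_ofFn] at hle
      rcases Nat.lt_or_ge L'.length (k + 2) with h | h
      · exact absurd (hsub.eq_of_length (by simp [hL]; omega)).symm hne
      · exact h
    have hWlen : W.length = L'.length + 2 := by
      simp [hWdef, withSent]
    have hpw := List.pairwise_iff_get.mp (List.isChain_iff_pairwise.mp hch)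
    have hss : ∀ (a b : ℕ) (ha : a < W.length) (hb : b < W.length), a < b →
        W.get ⟨a, ha⟩ ⊂ W.get ⟨b, hb⟩ :=
      fun a b ha hb h => hpw ⟨a, ha⟩ ⟨b, hb⟩ (Fin.mk_lt_mk.mpr h)
    have hgetmono : ∀ (a b : ℕ) (ha : a < W.length) (hb : b < W.length), a ≤ b →
        W.get ⟨a, ha⟩ ⊆ W.get ⟨b, hb⟩ := by
      intro a b ha hb hab
      rcases Nat.eq_or_lt_of_le hab with h | h
      · subst h; exact subset_rfl
      · exact (hss a b ha hb h).subset
    have hsub2 : (withSent (2 * k + 3) L).Sublist W := by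
      unfold withSent
      exact (hsub.cons₂ ∅).append (List.Sublist.refl _)
    have hmem : ∀ j, j ≤ k + 2 → U k j ∈ W := by
      intro j hj
      apply hsub2.subset
      rw [hWS, List.mem_ofFn]
      exact ⟨⟨j, by omega⟩, rfl⟩
    set p : ℕ → ℕ := fun j => W.idxOf (U k j) with hpdef
    have hplt : ∀ j, j ≤ k + 2 → p j < W.length :=
      fun j hj => List.idxOf_lt_length_iff.mpr (hmem j hj)
    have hpget : ∀ (j : ℕ) (h : p j < W.length), W.get ⟨p j, h⟩ = U k j :=
      fun j h => List.idxOf_get h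
    have hpmono : ∀ j j', j < j' → j' ≤ k + 2 → p j < p j' := by
      intro j j' hjj hj'
      have hU : U k j ⊂ U k j' := U_ssubset' hjj hj'
      by_contra hge
      push_neg at hge
      rcases Nat.eq_or_lt_of_le hge with h | h
      · have e : (⟨p j, hplt j (by omega)⟩ : Fin W.length) = ⟨p j', hplt j' hj'⟩ :=
          Fin.ext h.symm
        have h2 : U k j = U k j' := by
          rw [← hpget j (hplt j (by omega)), ← hpget j' (hplt j' hj'), e]
        exact hU.ne h2
      · have := hss (p j') (p j) (hplt j' hj') (hplt j (by omega)) h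
        rw [hpget, hpget] at this
        exact absurd (this.trans hU) (ssubset_irrefl _)
    have hp0 : p 0 = 0 := by
      rw [hpdef]
      simp only [U_zero, hWdef, withSent, List.cons_append]
      exact List.idxOf_cons_self
    have hlastget : ∀ h : W.length - 1 < W.length, W.get ⟨W.length - 1, h⟩ = Finset.univ := by
      intro h
      rw [List.get_eq_getElem]
      exact List.getElem_concat_length (l := ∅ :: L') (by simp [hWlen]) _
    have hptop : p (k + 2) = W.length - 1 := by
      have h1 := hplt (k + 2) le_rfl
      by_contra hne2
      have h2 : p (k + 2) < W.length - 1 := by omega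
      have h3 := hss (p (k + 2)) (W.length - 1) (hplt _ le_rfl) (by omega) h2
      rw [hpget, hlastget] at h3
      rw [U_top] at h3
      exact (ssubset_irrefl _) (h3.trans_subset (Finset.subset_univ _))
    have hgap : ∃ i, i ≤ k + 1 ∧ p i + 2 ≤ p (i + 1) := by
      by_contra hno
      push_neg at hno
      have key : ∀ j, j ≤ k + 2 → p j ≤ j := by
        intro j
        induction j with
        | zero => intro _; omega
        | succ j ih =>
          intro hj
          have h1 := hno j (by omega)
          have h2 := ih (by omega)
          omega
      have := key (k + 2) le_rfl
      omega
    obtain ⟨i, hik, hgap⟩ := hgap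
    have hQlt : p (i + 1) < W.length := hplt (i + 1) (by omega)
    have hPlt : p i < W.length := hplt i (by omega)
    have hP1lt : p i + 1 < W.length := by omega
    have hP2lt : p i + 2 < W.length := by omega
    -- A := W.get ⟨p i + 1, _⟩ sits strictly between U k i and U k (i+1)
    have hA1 : U k i ⊂ W.get ⟨p i + 1, hP1lt⟩ := by
      have := hss (p i) (p i + 1) hPlt hP1lt (Nat.lt_succ_self _)
      rwa [hpget] at this
    have hA2 : W.get ⟨p i + 1, hP1lt⟩ ⊂ U k (i + 1) := by
      have := hss (p i + 1) (p (i + 1)) hP1lt hQlt (by omega)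
      rwa [hpget] at this
    rcases Nat.lt_or_ge k i with hik1 | hik1
    · -- i = k+1 : the gap U (k+1) ⊂ U (k+2) is a singleton, no room
      have hieq : i = k + 1 := by omega
      obtain ⟨t, ht1, ht2⟩ := Finset.exists_of_ssubset hA1
      obtain ⟨t', ht'1, ht'2⟩ := Finset.exists_of_ssubset hA2
      have h1 : t ∈ U k (i + 1) \ U k i := Finset.mem_sdiff.mpr ⟨hA2.subset ht1, ht2⟩
      have h2 : t' ∈ U k (i + 1) \ U k i :=
        Finset.mem_sdiff.mpr ⟨ht'1, fun h => ht'2 (hA1.subset h)⟩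
      rw [mem_diff_U (by omega)] at h1 h2
      have : t = t' := Fin.ext (by omega)
      exact ht'2 (this ▸ ht1)
    · -- i ≤ k
      obtain ⟨a, ha, c, hc, hca⟩ := hcond (p i) hP2lt
      rw [hpget] at ha
      rw [Fin.lt_def] at hca
      rw [Finset.mem_sdiff] at ha hc
      have haU : a ∈ U k (i + 1) \ U k i :=
        Finset.mem_sdiff.mpr ⟨hA2.subset ha.1, ha.2⟩
      have hcU : c ∈ U k (i + 1) \ U k i := by
        refine Finset.mem_sdiff.mpr ⟨?_, fun h => hc.2 (hA1.subset h)⟩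
        have hsub3 : W.get ⟨p i + 2, hP2lt⟩ ⊆ U k (i + 1) := by
          have := hgetmono (p i + 2) (p (i + 1)) hP2lt hQlt (by omega)
          rwa [hpget] at this
        exact hsub3 hc.1
      rw [mem_diff_U (by omega)] at haU hcU
      have hav : (a : ℕ) = 2 * k + 2 - i := by omega
      have hcv : (c : ℕ) = i := by omega
      -- W.get ⟨p i + 2, _⟩ = U k (i+1)
      have heq : W.get ⟨p i + 2, hP2lt⟩ = U k (i + 1) := by
        have hsub3 : W.get ⟨p i + 2, hP2lt⟩ ⊆ U k (i + 1) := by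
          have := hgetmono (p i + 2) (p (i + 1)) hP2lt hQlt (by omega)
          rwa [hpget] at this
        by_contra hne2
        obtain ⟨e, he1, he2⟩ := Finset.exists_of_ssubset ⟨hsub3, fun h => hne2 (subset_antisymm hsub3 h)⟩
        have heU : e ∈ U k (i + 1) \ U k i := by
          refine Finset.mem_sdiff.mpr ⟨he1, fun h => he2 ?_⟩
          exact (hss (p i + 1) (p i + 2) hP1lt hP2lt (Nat.lt_succ_self _)).subset (hA1.subset h)
        rw [mem_diff_U (by omega)] at heU
        have hcmem : c ∈ W.get ⟨p i + 2, hP2lt⟩ := hc.1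
        have hamem : a ∈ W.get ⟨p i + 2, hP2lt⟩ :=
          (hss (p i + 1) (p i + 2) hP1lt hP2lt (Nat.lt_succ_self _)).subset ha.1
        rcases heU with h | h
        · exact he2 (Fin.ext (by omega : (e : ℕ) = (c : ℕ)) ▸ hcmem)
        · exact he2 (Fin.ext (by omega : (e : ℕ) = (a : ℕ)) ▸ hamem)
      -- hence p (i+1) = p i + 2 and p (i+2) > p i + 2
      have hQeq : p (i + 1) = p i + 2 := by
        by_contra hne2
        have h2 : p i + 2 < p (i + 1) := by omega
        have h3 := hss (p i + 2) (p (i + 1)) hP2lt hQlt h2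
        rw [hpget, heq] at h3
        exact (ssubset_irrefl _) h3
      have hp2mono : p (i + 1) < p (i + 2) := hpmono (i + 1) (i + 2) (Nat.lt_succ_self _) (by omega)
      have hP3lt : p i + 3 < W.length := by
        have := hplt (i + 2) (by omega)
        omega
      obtain ⟨a', ha', c', hc', hca'⟩ := hcond (p i + 1) hP3lt
      rw [Fin.lt_def] at hca'
      rw [Finset.mem_sdiff] at ha' hc'
      have ha'mem : a' ∈ W.get ⟨p i + 1 + 1, by omega⟩ := ha'.1
      have heq' : W.get (⟨p i + 1 + 1, by omega⟩ : Fin W.length) = U k (i + 1) := heq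
      rw [heq'] at ha'mem
      have ha'U : a' ∈ U k (i + 1) \ U k i :=
        Finset.mem_sdiff.mpr ⟨ha'mem, fun h => ha'.2 (hA1.subset h)⟩
      rw [mem_diff_U (by omega)] at ha'U
      have ha'v : (a' : ℕ) = i := by
        rcases ha'U with h | h
        · exact h
        · exfalso
          exact ha'.2 (Fin.ext (by omega : (a' : ℕ) = (a : ℕ)) ▸ ha.1)
      have hc'U : c' ∈ U k (i + 2) \ U k (i + 1) := by
        refine Finset.mem_sdiff.mpr ⟨?_, ?_⟩
        · have hsub4 : W.get ⟨p i + 1 + 2, hP3lt⟩ ⊆ U k (i + 2) := by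
            have := hgetmono (p i + 3) (p (i + 2)) (by omega) (hplt (i + 2) (by omega)) (by omega)
            rw [hpget] at this
            exact this
          exact hsub4 hc'.1
        · intro h
          exact hc'.2 (heq' ▸ h)
      rw [show i + 2 = (i + 1) + 1 from rfl, mem_diff_U (by omega)] at hc'U
      omega
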